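/- arXiv:2106.04105 — 2 statements merged into one kernel-verified Lean document; each statement's English description precedes it below -/
import Mathlib

section
/- Let α ∈ (0,1], let μ be a probability distribution on the k-element subsets of [n] with single-element marginals p_i = (1/k)·∑_{S ∋ i} μ(S). Suppose that for all (z₁,…,zₙ) ∈ ℝ^n_{≥0}, g_μ(z₁,…,zₙ) ≤ (∑_{i=1}^n p_i z_i^{1/α})^{αk}. Then μ is (1/α)-entropically independent: for every probability distribution ν on the k-element subsets of [n] with supp(ν) ⊆ supp(μ), D(ν D_{k→1} ‖ μ D_{k→1}) ≤ (1/(αk))·D(ν ‖ μ). -/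
open Finset

/-- The generating polynomial `g_μ(z) = ∑_S μ(S) ∏_{i∈S} z_i`. -/
noncomputable def genPoly {n : ℕ} (μ : Finset (Fin n) → ℝ) (z : Fin n → ℝ) : ℝ :=
  ∑ S : Finset (Fin n), μ S * ∏ i ∈ S, z i

/-- The `k → 1` down operator: `(ν D_{k→1})(i) = (1/k) ∑_{S ∋ i} ν(S)`. -/
noncomputable def down1 {n : ℕ} (k : ℕ) (ν : Finset (Fin n) → ℝ) (i : Fin n) : ℝ :=
  (1 / (k : ℝ)) * ∑ S ∈ Finset.univ.filter (fun S => i ∈ S), ν S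

/-- KL divergence `D(ν ‖ μ) = ∑_x ν(x) log (ν(x)/μ(x))` on a finite type. -/
noncomputable def KLdiv {X : Type*} [Fintype X] (ν μ : X → ℝ) : ℝ :=
  ∑ x : X, ν x * Real.log (ν x / μ x)

private lemma swap_sum {n : ℕ} (f : Finset (Fin n) → ℝ) (g : Fin n → ℝ) :
    ∑ i : Fin n, (∑ S ∈ Finset.univ.filter (fun S => i ∈ S), f S) * g i
      = ∑ S : Finset (Fin n), f S * ∑ i ∈ S, g i := by
  simp_rw [Finset.sum_filter, Finset.sum_mul, ite_mul, zero_mul]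
  rw [Finset.sum_comm]
  refine Finset.sum_congr rfl fun S _ => ?_
  rw [Finset.mul_sum, Finset.sum_ite_mem, Finset.univ_inter]

theorem stmt_1 (n k : ℕ) (α : ℝ) (hα0 : 0 < α) (hα1 : α ≤ 1)
    (μ : Finset (Fin n) → ℝ)
    (hμ0 : ∀ S, 0 ≤ μ S)
    (hμk : ∀ S, μ S ≠ 0 → S.card = k)
    (hμ1 : ∑ S : Finset (Fin n), μ S = 1)
    (hdagger : ∀ z : Fin n → ℝ, (∀ i, 0 ≤ z i) →
      genPoly μ z ≤ (∑ i : Fin n, down1 k μ i * z i ^ (1 / α)) ^ (α * (k : ℝ))) :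
    ∀ ν : Finset (Fin n) → ℝ,
      (∀ S, 0 ≤ ν S) → (∀ S, ν S ≠ 0 → S.card = k) →
      (∑ S : Finset (Fin n), ν S = 1) → (∀ S, μ S = 0 → ν S = 0) →
      KLdiv (down1 k ν) (down1 k μ) ≤ (1 / (α * (k : ℝ))) * KLdiv ν μ := by
  intro ν hν0 hνk hν1 hsupp
  rcases Nat.eq_zero_or_pos k with hk | hk
  · subst hk
    simp [down1, KLdiv]
  have hkR : (0 : ℝ) < k := by exact_mod_cast hk
  set p : Fin n → ℝ := down1 k μ with hp_def
  set q : Fin n → ℝ := down1 k ν with hq_def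
  have hp0 : ∀ i, 0 ≤ p i := by
    intro i
    rw [hp_def]
    unfold down1
    exact mul_nonneg (by positivity) (Finset.sum_nonneg fun S _ => hμ0 S)
  have hq0 : ∀ i, 0 ≤ q i := by
    intro i
    rw [hq_def]
    unfold down1
    exact mul_nonneg (by positivity) (Finset.sum_nonneg fun S _ => hν0 S)
  -- q i > 0 whenever i ∈ S and ν S ≠ 0
  have hq_pos : ∀ (i : Fin n) (S : Finset (Fin n)), i ∈ S → ν S ≠ 0 → 0 < q i := by
    intro i S hiS hνS
    have hνSpos : 0 < ν S := (hν0 S).lt_of_ne (Ne.symm hνS)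
    have hmem : S ∈ Finset.univ.filter (fun T => i ∈ T) := by
      simp [hiS]
    have hsum : ν S ≤ ∑ T ∈ Finset.univ.filter (fun T => i ∈ T), ν T :=
      Finset.single_le_sum (fun T _ => hν0 T) hmem
    rw [hq_def]
    unfold down1
    have : 0 < ∑ T ∈ Finset.univ.filter (fun T => i ∈ T), ν T := lt_of_lt_of_le hνSpos hsum
    positivity
  -- p i > 0 whenever q i ≠ 0
  have hp_pos : ∀ i, q i ≠ 0 → 0 < p i := by
    intro i hqi
    have hsum : 0 < ∑ T ∈ Finset.univ.filter (fun T => i ∈ T), ν T := by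
      rcases (Finset.sum_nonneg fun T _ => hν0 T).lt_or_eq with h | h
      · exact h
      · exfalso
        apply hqi
        rw [hq_def]
        unfold down1
        rw [← h, mul_zero]
    obtain ⟨S, hSmem, hSpos⟩ : ∃ S ∈ Finset.univ.filter (fun T => i ∈ T), 0 < ν S := by
      by_contra hcon
      push_neg at hcon
      have : ∑ T ∈ Finset.univ.filter (fun T => i ∈ T), ν T ≤ 0 :=
        Finset.sum_nonpos fun T hT => by
          have := hcon T hT
          have := hν0 T
          linarith
      linarith
    have hμS : 0 < μ S := by
      rcases (hμ0 S).lt_or_eq with h | h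
      · exact h
      · exfalso
        have := hsupp S h.symm
        rw [this] at hSpos
        exact lt_irrefl 0 hSpos
    have hsumμ : μ S ≤ ∑ T ∈ Finset.univ.filter (fun T => i ∈ T), μ T :=
      Finset.single_le_sum (fun T _ => hμ0 T) hSmem
    rw [hp_def]
    unfold down1
    have : 0 < ∑ T ∈ Finset.univ.filter (fun T => i ∈ T), μ T := lt_of_lt_of_le hμS hsumμ
    positivity
  -- total mass of q is 1
  have hqk : ∀ i, ∑ S ∈ Finset.univ.filter (fun S => i ∈ S), ν S = (k : ℝ) * q i := by
    intro i
    rw [hq_def]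
    unfold down1
    field_simp
  have hq1 : ∑ i : Fin n, q i = 1 := by
    have hswap1 := swap_sum ν (fun _ => (1 : ℝ))
    simp only [mul_one] at hswap1
    have hcard : ∑ S : Finset (Fin n), ν S * ∑ _i ∈ S, (1 : ℝ) = (k : ℝ) := by
      calc ∑ S : Finset (Fin n), ν S * ∑ _i ∈ S, (1 : ℝ)
          = ∑ S : Finset (Fin n), ν S * (k : ℝ) := by
            refine Finset.sum_congr rfl fun S _ => ?_
            by_cases h : ν S = 0
            · simp [h]
            · rw [Finset.sum_const, nsmul_eq_mul, mul_one, hνk S h]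
        _ = (k : ℝ) := by rw [← Finset.sum_mul, hν1, one_mul]
    have : ∑ i : Fin n, (k : ℝ) * q i = (k : ℝ) := by
      calc ∑ i : Fin n, (k : ℝ) * q i
          = ∑ i : Fin n, ∑ S ∈ Finset.univ.filter (fun S => i ∈ S), ν S := by
            refine Finset.sum_congr rfl fun i _ => (hqk i).symm
        _ = (k : ℝ) := by rw [hswap1, hcard]
    rw [← Finset.mul_sum] at this
    field_simp at this
    exact this
  -- the tilt
  set z : Fin n → ℝ := fun i => (q i / p i) ^ α with hz_def
  have hz0 : ∀ i, 0 ≤ z i := fun i =>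
    Real.rpow_nonneg (div_nonneg (hq0 i) (hp0 i)) α
  have hz_pos : ∀ (i : Fin n) (S : Finset (Fin n)), i ∈ S → ν S ≠ 0 → 0 < z i := by
    intro i S hiS hνS
    have hq := hq_pos i S hiS hνS
    have hp := hp_pos i hq.ne'
    exact Real.rpow_pos_of_pos (div_pos hq hp) α
  have hsum1 : ∑ i : Fin n, p i * z i ^ (1 / α) = 1 := by
    have heq : ∑ i : Fin n, p i * z i ^ (1 / α) = ∑ i : Fin n, q i := by
      refine Finset.sum_congr rfl fun i _ => ?_
      have hzi : z i ^ (1 / α) = q i / p i := by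
        simp only [hz_def]
        rw [← Real.rpow_mul (div_nonneg (hq0 i) (hp0 i)), mul_one_div, div_self hα0.ne',
          Real.rpow_one]
      rw [hzi]
      by_cases hp : p i = 0
      · have hq : q i = 0 := by
          by_contra hq
          exact (hp_pos i hq).ne' hp
        simp [hp, hq]
      · rw [mul_comm, div_mul_cancel₀ _ hp]
    rw [heq, hq1]
  -- the generating polynomial bound at z
  have hgen : ∑ S : Finset (Fin n), μ S * ∏ i ∈ S, z i ≤ 1 := by
    have := hdagger z hz0
    rw [hsum1, Real.one_rpow] at this
    exact this
  -- positivity of the tilted weights on supp ν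
  have hb0 : ∀ S, 0 ≤ μ S * ∏ i ∈ S, z i := fun S =>
    mul_nonneg (hμ0 S) (Finset.prod_nonneg fun i _ => hz0 i)
  have hbpos : ∀ S, ν S ≠ 0 → 0 < μ S * ∏ i ∈ S, z i := by
    intro S hνS
    have hμS : 0 < μ S := by
      rcases (hμ0 S).lt_or_eq with h | h
      · exact h
      · exact absurd (hsupp S h.symm) hνS
    exact mul_pos hμS (Finset.prod_pos fun i hi => hz_pos i S hi hνS)
  -- Gibbs' inequality for ν against the (sub-probability) tilted weights
  have hgibbs : 0 ≤ ∑ S : Finset (Fin n), ν S * Real.log (ν S / (μ S * ∏ i ∈ S, z i)) := by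
    have key : ∑ S : Finset (Fin n), ν S * Real.log ((μ S * ∏ i ∈ S, z i) / ν S) ≤ 0 := by
      have step : ∑ S : Finset (Fin n), ν S * Real.log ((μ S * ∏ i ∈ S, z i) / ν S)
          ≤ ∑ S : Finset (Fin n), ((μ S * ∏ i ∈ S, z i) - ν S) := by
        refine Finset.sum_le_sum fun S _ => ?_
        by_cases h : ν S = 0
        · simpa [h] using hb0 S
        · have hb := hbpos S h
          have hνpos : 0 < ν S := (hν0 S).lt_of_ne (Ne.symm h)
          have hlog := Real.log_le_sub_one_of_pos (div_pos hb hνpos)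
          calc ν S * Real.log ((μ S * ∏ i ∈ S, z i) / ν S)
              ≤ ν S * ((μ S * ∏ i ∈ S, z i) / ν S - 1) :=
                mul_le_mul_of_nonneg_left hlog (hν0 S)
            _ = (μ S * ∏ i ∈ S, z i) - ν S := by field_simp
      have : ∑ S : Finset (Fin n), ((μ S * ∏ i ∈ S, z i) - ν S) ≤ 0 := by
        rw [Finset.sum_sub_distrib, hν1]
        linarith [hgen]
      linarith
    have flip : ∑ S : Finset (Fin n), ν S * Real.log (ν S / (μ S * ∏ i ∈ S, z i))
        = -∑ S : Finset (Fin n), ν S * Real.log ((μ S * ∏ i ∈ S, z i) / ν S) := by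
      rw [← Finset.sum_neg_distrib]
      refine Finset.sum_congr rfl fun S _ => ?_
      rw [show ν S / (μ S * ∏ i ∈ S, z i) = ((μ S * ∏ i ∈ S, z i) / ν S)⁻¹ from
        (inv_div _ _).symm, Real.log_inv, mul_neg]
    rw [flip]
    linarith
  -- decompose the Gibbs sum
  have hdecomp : ∑ S : Finset (Fin n), ν S * Real.log (ν S / (μ S * ∏ i ∈ S, z i))
      = KLdiv ν μ - ∑ S : Finset (Fin n), ν S * ∑ i ∈ S, Real.log (z i) := by
    unfold KLdiv
    rw [← Finset.sum_sub_distrib]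
    refine Finset.sum_congr rfl fun S _ => ?_
    by_cases h : ν S = 0
    · simp [h]
    · have hμS : 0 < μ S := by
        rcases (hμ0 S).lt_or_eq with h' | h'
        · exact h'
        · exact absurd (hsupp S h'.symm) h
      have hprodpos : 0 < ∏ i ∈ S, z i := Finset.prod_pos fun i hi => hz_pos i S hi h
      rw [← mul_sub]
      congr 1
      rw [← Real.log_prod (s := S) (f := z) (fun i hi => (hz_pos i S hi h).ne'),
        ← Real.log_div (div_ne_zero h hμS.ne') hprodpos.ne']
      congr 1
      field_simp
  -- identify the tilt sum with α k times the down-level KL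
  have hfinal : ∑ S : Finset (Fin n), ν S * ∑ i ∈ S, Real.log (z i)
      = α * (k : ℝ) * KLdiv q p := by
    rw [← swap_sum ν (fun i => Real.log (z i))]
    unfold KLdiv
    rw [Finset.mul_sum]
    refine Finset.sum_congr rfl fun i _ => ?_
    rw [hqk i]
    by_cases h : q i = 0
    · simp [h]
    · have hqpos : 0 < q i := (hq0 i).lt_of_ne (Ne.symm h)
      have hppos := hp_pos i h
      have : Real.log (z i) = α * Real.log (q i / p i) := by
        simp only [hz_def]
        exact Real.log_rpow (div_pos hqpos hppos) α
      rw [this]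
      ring
  -- conclude
  have hαk : 0 < α * (k : ℝ) := mul_pos hα0 hkR
  have hKL : α * (k : ℝ) * KLdiv q p ≤ KLdiv ν μ := by
    rw [← hfinal]
    linarith [hgibbs, hdecomp]
  calc KLdiv q p = (1 / (α * (k : ℝ))) * (α * (k : ℝ) * KLdiv q p) := by
        field_simp
    _ ≤ (1 / (α * (k : ℝ))) * KLdiv ν μ :=
        mul_le_mul_of_nonneg_left hKL (by positivity)
end

section
/- Let α ∈ (0,1] and let μ be a probability distribution on the k-element subsets of [n]. Suppose that for every external field λ = (λ₁,…,λₙ) ∈ ℝ^n_{>0}, the distribution λ ∗ μ is (1/α)-entropically independent, i.e., for every probability distribution ν with supp(ν) ⊆ supp(λ ∗ μ), D(ν D_{k→1} ‖ (λ ∗ μ) D_{k→1}) ≤ (1/(αk))·D(ν ‖ λ ∗ μ). Then μ is α-fractionally log-concave: (z₁,…,zₙ) ↦ log g_μ(z₁^α,…,zₙ^α) is concave on the positive orthant ℝ^n_{>0}. -/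
open Finset

/-- The external field `λ ∗ μ`, with `(λ ∗ μ)(S) ∝ μ(S) ∏_{i∈S} λ_i`. -/
noncomputable def extField {n : ℕ} (μ : Finset (Fin n) → ℝ) (lam : Fin n → ℝ)
    (S : Finset (Fin n)) : ℝ :=
  μ S * (∏ i ∈ S, lam i) / (∑ T : Finset (Fin n), μ T * ∏ i ∈ T, lam i)

lemma genPoly_pos {n : ℕ} {μ : Finset (Fin n) → ℝ} (hμ0 : ∀ S, 0 ≤ μ S)
    (hμ1 : ∑ S : Finset (Fin n), μ S = 1) {w : Fin n → ℝ} (hw : ∀ i, 0 < w i) :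
    0 < genPoly μ w := by
  obtain ⟨S₀, -, hS₀⟩ := Finset.exists_ne_zero_of_sum_ne_zero
    (f := μ) (by rw [hμ1]; norm_num)
  refine Finset.sum_pos' (fun S _ => mul_nonneg (hμ0 S)
    (Finset.prod_nonneg fun i _ => (hw i).le)) ⟨S₀, Finset.mem_univ _, ?_⟩
  exact mul_pos ((hμ0 S₀).lt_of_ne (Ne.symm hS₀)) (Finset.prod_pos fun i _ => hw i)

lemma sum_swap_sets {n : ℕ} (ν : Finset (Fin n) → ℝ) (f : Fin n → ℝ) :
    ∑ S : Finset (Fin n), ν S * ∑ i ∈ S, f i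
      = ∑ i : Fin n, (∑ S ∈ Finset.univ.filter (fun S => i ∈ S), ν S) * f i := by
  calc ∑ S : Finset (Fin n), ν S * ∑ i ∈ S, f i
      = ∑ S : Finset (Fin n), ∑ i : Fin n, (if i ∈ S then ν S * f i else 0) := by
        refine Finset.sum_congr rfl fun S _ => ?_
        rw [Finset.sum_ite_mem, Finset.univ_inter, Finset.mul_sum]
    _ = ∑ i : Fin n, ∑ S : Finset (Fin n), (if i ∈ S then ν S * f i else 0) :=
        Finset.sum_comm
    _ = ∑ i : Fin n, (∑ S ∈ Finset.univ.filter (fun S => i ∈ S), ν S) * f i := by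
        refine Finset.sum_congr rfl fun i _ => ?_
        rw [← Finset.sum_filter, Finset.sum_mul]

lemma sum_down1_mul {n : ℕ} (k : ℕ) (ν : Finset (Fin n) → ℝ) (f : Fin n → ℝ) :
    ∑ i, down1 k ν i * f i
      = (1 / (k:ℝ)) * ∑ S : Finset (Fin n), ν S * ∑ i ∈ S, f i := by
  rw [sum_swap_sets, Finset.mul_sum]
  simp_rw [down1, mul_assoc]

lemma sum_down1_one {n k : ℕ} (hk : (k:ℝ) ≠ 0) {ν : Finset (Fin n) → ℝ}
    (hcard : ∀ S, ν S ≠ 0 → S.card = k) (hsum : ∑ S : Finset (Fin n), ν S = 1) :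
    ∑ i, down1 k ν i = 1 := by
  have h1 : ∑ i, down1 k ν i = ∑ i, down1 k ν i * (fun _ : Fin n => (1:ℝ)) i := by
    simp
  rw [h1, sum_down1_mul]
  have h2 : ∀ S : Finset (Fin n), ν S * ∑ i ∈ S, (1:ℝ) = ν S * k := by
    intro S
    by_cases hS : ν S = 0
    · simp [hS]
    · rw [Finset.sum_const, hcard S hS]; simp
  rw [Finset.sum_congr rfl fun S _ => h2 S, ← Finset.sum_mul, hsum]
  field_simp

lemma extField_nonneg {n : ℕ} {μ : Finset (Fin n) → ℝ} (hμ0 : ∀ S, 0 ≤ μ S)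
    (hμ1 : ∑ S : Finset (Fin n), μ S = 1) {w : Fin n → ℝ} (hw : ∀ i, 0 < w i)
    (S : Finset (Fin n)) : 0 ≤ extField μ w S :=
  div_nonneg (mul_nonneg (hμ0 S) (Finset.prod_nonneg fun i _ => (hw i).le))
    (genPoly_pos hμ0 hμ1 hw).le

lemma extField_eq_zero_iff {n : ℕ} {μ : Finset (Fin n) → ℝ} (hμ0 : ∀ S, 0 ≤ μ S)
    (hμ1 : ∑ S : Finset (Fin n), μ S = 1) {w : Fin n → ℝ} (hw : ∀ i, 0 < w i)
    (S : Finset (Fin n)) : extField μ w S = 0 ↔ μ S = 0 := by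
  have hG : genPoly μ w ≠ 0 := (genPoly_pos hμ0 hμ1 hw).ne'
  have hP : ∏ i ∈ S, w i ≠ 0 := (Finset.prod_pos fun i _ => hw i).ne'
  constructor
  · intro h
    rcases mul_eq_zero.mp ((div_eq_zero_iff.mp h).resolve_right hG) with h' | h'
    · exact h'
    · exact absurd h' hP
  · intro h
    show μ S * (∏ i ∈ S, w i) / genPoly μ w = 0
    rw [h, zero_mul, zero_div]

lemma extField_sum {n : ℕ} {μ : Finset (Fin n) → ℝ} (hμ0 : ∀ S, 0 ≤ μ S)
    (hμ1 : ∑ S : Finset (Fin n), μ S = 1) {w : Fin n → ℝ} (hw : ∀ i, 0 < w i) :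
    ∑ S : Finset (Fin n), extField μ w S = 1 := by
  have : ∑ S : Finset (Fin n), extField μ w S
      = (∑ S : Finset (Fin n), μ S * ∏ i ∈ S, w i) / genPoly μ w :=
    (Finset.sum_div _ _ _).symm
  rw [this]
  exact div_self (genPoly_pos hμ0 hμ1 hw).ne'

lemma tangent_ineq (n k : ℕ) (hk : k ≠ 0) (α : ℝ) (hα0 : 0 < α)
    (μ : Finset (Fin n) → ℝ)
    (hμ0 : ∀ S, 0 ≤ μ S)
    (hμk : ∀ S, μ S ≠ 0 → S.card = k)
    (hμ1 : ∑ S : Finset (Fin n), μ S = 1)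
    (hEI : ∀ lam : Fin n → ℝ, (∀ i, 0 < lam i) →
      ∀ ν : Finset (Fin n) → ℝ,
        (∀ S, 0 ≤ ν S) → (∀ S, ν S ≠ 0 → S.card = k) →
        (∑ S : Finset (Fin n), ν S = 1) →
        (∀ S, extField μ lam S = 0 → ν S = 0) →
        KLdiv (down1 k ν) (down1 k (extField μ lam)) ≤
          (1 / (α * (k : ℝ))) * KLdiv ν (extField μ lam))
    (l z : Fin n → ℝ) (hl : ∀ i, 0 < l i) (hz : ∀ i, 0 < z i) :
    Real.log (genPoly μ (fun i => z i ^ α)) ≤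
      Real.log (genPoly μ (fun i => l i ^ α)) +
      α * k * ((∑ i, down1 k (extField μ (fun i => l i ^ α)) i * (z i / l i)) - 1) := by
  have hkR : ((k:ℝ)) ≠ 0 := Nat.cast_ne_zero.mpr hk
  have hkpos : (0:ℝ) < k := Nat.cast_pos.mpr (Nat.pos_of_ne_zero hk)
  set w : Fin n → ℝ := fun i => l i ^ α with hw_def
  set u : Fin n → ℝ := fun i => z i ^ α with hu_def
  have hwpos : ∀ i, 0 < w i := fun i => Real.rpow_pos_of_pos (hl i) α
  have hupos : ∀ i, 0 < u i := fun i => Real.rpow_pos_of_pos (hz i) α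
  have hGw : 0 < genPoly μ w := genPoly_pos hμ0 hμ1 hwpos
  have hGu : 0 < genPoly μ u := genPoly_pos hμ0 hμ1 hupos
  set m : Finset (Fin n) → ℝ := extField μ w with hm_def
  set ν : Finset (Fin n) → ℝ := extField μ u with hν_def
  have hν0 : ∀ S, 0 ≤ ν S := extField_nonneg hμ0 hμ1 hupos
  have hm0 : ∀ S, 0 ≤ m S := extField_nonneg hμ0 hμ1 hwpos
  have hνμ : ∀ S, ν S ≠ 0 → μ S ≠ 0 := by
    intro S h hc
    exact h ((extField_eq_zero_iff hμ0 hμ1 hupos S).mpr hc)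
  have hνcard : ∀ S, ν S ≠ 0 → S.card = k := fun S h => hμk S (hνμ S h)
  have hmcard : ∀ S, m S ≠ 0 → S.card = k := by
    intro S h
    refine hμk S fun hc => h ((extField_eq_zero_iff hμ0 hμ1 hwpos S).mpr hc)
  have hνsum : ∑ S : Finset (Fin n), ν S = 1 := extField_sum hμ0 hμ1 hupos
  have hmsum : ∑ S : Finset (Fin n), m S = 1 := extField_sum hμ0 hμ1 hwpos
  have hνsupp : ∀ S, m S = 0 → ν S = 0 := by
    intro S h
    exact (extField_eq_zero_iff hμ0 hμ1 hupos S).mpr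
      ((extField_eq_zero_iff hμ0 hμ1 hwpos S).mp h)
  have hkl := hEI w hwpos ν hν0 hνcard hνsum hνsupp
  set p : Fin n → ℝ := down1 k ν with hp_def
  set q : Fin n → ℝ := down1 k m with hq_def
  have hp0 : ∀ i, 0 ≤ p i := by
    intro i
    exact mul_nonneg (by positivity) (Finset.sum_nonneg fun S _ => hν0 S)
  have hq0 : ∀ i, 0 ≤ q i :=
    fun i => mul_nonneg (by positivity) (Finset.sum_nonneg fun S _ => hm0 S)
  have hpsum : ∑ i, p i = 1 := sum_down1_one hkR hνcard hνsum
  have hqsum : ∑ i, q i = 1 := sum_down1_one hkR hmcard hmsum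
  have hqp : ∀ i, q i = 0 → p i = 0 := by
    intro i h
    have h1 : ∑ S ∈ Finset.univ.filter (fun S => i ∈ S), m S = 0 := by
      have := h
      rw [hq_def, down1] at this
      rcases mul_eq_zero.mp this with h' | h'
      · exact absurd h' (by positivity)
      · exact h'
    have h2 : ∀ S ∈ Finset.univ.filter (fun S => i ∈ S), ν S = 0 := by
      intro S hS
      exact hνsupp S ((Finset.sum_eq_zero_iff_of_nonneg fun T _ => hm0 T).mp h1 S hS)
    rw [hp_def, down1, Finset.sum_eq_zero h2, mul_zero]
  -- KL divergence computation
  have hKL : KLdiv ν m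
      = α * k * (∑ i, p i * Real.log (z i / l i))
        + (Real.log (genPoly μ w) - Real.log (genPoly μ u)) := by
    have hterm : ∀ S : Finset (Fin n), ν S * Real.log (ν S / m S)
        = ν S * ((∑ i ∈ S, α * Real.log (z i / l i))
            + (Real.log (genPoly μ w) - Real.log (genPoly μ u))) := by
      intro S
      by_cases hS : ν S = 0
      · rw [hS, zero_mul, zero_mul]
      · have hμS : 0 < μ S := (hμ0 S).lt_of_ne (Ne.symm (hνμ S hS))
        have hPw : 0 < ∏ i ∈ S, w i := Finset.prod_pos fun i _ => hwpos i
        have hPu : 0 < ∏ i ∈ S, u i := Finset.prod_pos fun i _ => hupos i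
        have hratio : ν S / m S = (∏ i ∈ S, (u i / w i)) * (genPoly μ w / genPoly μ u) := by
          show (μ S * (∏ i ∈ S, u i) / genPoly μ u) / (μ S * (∏ i ∈ S, w i) / genPoly μ w)
            = (∏ i ∈ S, (u i / w i)) * (genPoly μ w / genPoly μ u)
          rw [Finset.prod_div_distrib]
          field_simp
        have hlog : Real.log (ν S / m S)
            = (∑ i ∈ S, α * Real.log (z i / l i))
              + (Real.log (genPoly μ w) - Real.log (genPoly μ u)) := by
          rw [hratio, Real.log_mul (Finset.prod_pos fun i _ => div_pos (hupos i) (hwpos i)).ne'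
              (div_pos hGw hGu).ne',
            Real.log_div hGw.ne' hGu.ne',
            Real.log_prod (fun i _ => (div_pos (hupos i) (hwpos i)).ne')]
          congr 1
          refine Finset.sum_congr rfl fun i _ => ?_
          rw [hu_def, hw_def]
          rw [show z i ^ α / l i ^ α = (z i / l i) ^ α from
            (Real.div_rpow (hz i).le (hl i).le α).symm]
          exact Real.log_rpow (div_pos (hz i) (hl i)) α
        rw [hlog]
    rw [KLdiv, Finset.sum_congr rfl fun S _ => hterm S]
    simp_rw [mul_add, Finset.sum_add_distrib, ← Finset.sum_mul, hνsum, one_mul]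
    congr 1
    have hswap := sum_down1_mul k ν (fun i => α * Real.log (z i / l i))
    rw [← hp_def] at hswap
    have : ∑ S : Finset (Fin n), ν S * ∑ i ∈ S, α * Real.log (z i / l i)
        = (k:ℝ) * ∑ i, p i * (α * Real.log (z i / l i)) := by
      rw [hswap]
      field_simp
    rw [this, Finset.mul_sum, Finset.mul_sum]
    exact Finset.sum_congr rfl fun i _ => by ring
  -- pointwise bound
  have hstep : (∑ i, p i * Real.log (z i / l i)) - (∑ i, p i * Real.log (p i / q i))
      ≤ (∑ i, q i * (z i / l i)) - 1 := by
    rw [← hpsum, ← Finset.sum_sub_distrib, ← Finset.sum_sub_distrib]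
    refine Finset.sum_le_sum fun i _ => ?_
    by_cases hp : p i = 0
    · rw [hp]
      simp only [zero_mul, sub_zero, zero_sub, sub_zero]
      have : 0 ≤ q i * (z i / l i) := mul_nonneg (hq0 i) (div_pos (hz i) (hl i)).le
      linarith
    · have hppos : 0 < p i := (hp0 i).lt_of_ne (Ne.symm hp)
      have hqpos : 0 < q i := (hq0 i).lt_of_ne (fun h => hp (hqp i h.symm))
      have hr : 0 < z i / l i := div_pos (hz i) (hl i)
      have hx : 0 < (z i / l i) / (p i / q i) := by positivity
      have hle := Real.log_le_sub_one_of_pos hx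
      have hlogd : Real.log ((z i / l i) / (p i / q i))
          = Real.log (z i / l i) - Real.log (p i / q i) :=
        Real.log_div hr.ne' (div_pos hppos hqpos).ne'
      rw [hlogd] at hle
      have hmul := mul_le_mul_of_nonneg_left hle (hp0 i)
      have heq : p i * ((z i / l i) / (p i / q i) - 1) = q i * (z i / l i) - p i := by
        field_simp [hppos.ne', hqpos.ne', (hl i).ne']
      calc p i * Real.log (z i / l i) - p i * Real.log (p i / q i)
          = p i * (Real.log (z i / l i) - Real.log (p i / q i)) := by ring
        _ ≤ p i * ((z i / l i) / (p i / q i) - 1) := hmul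
        _ = q i * (z i / l i) - p i := heq
  -- combine
  have hαk : (0:ℝ) < α * k := mul_pos hα0 hkpos
  rw [hKL] at hkl
  have hKLp : KLdiv p q = ∑ i, p i * Real.log (p i / q i) := rfl
  rw [hKLp] at hkl
  have hkl2 : (∑ i, p i * Real.log (p i / q i)) * (α * k)
      ≤ α * k * (∑ i, p i * Real.log (z i / l i))
        + (Real.log (genPoly μ w) - Real.log (genPoly μ u)) := by
    calc (∑ i, p i * Real.log (p i / q i)) * (α * k)
        ≤ (1 / (α * (k:ℝ)) * (α * k * (∑ i, p i * Real.log (z i / l i))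
            + (Real.log (genPoly μ w) - Real.log (genPoly μ u)))) * (α * k) :=
          mul_le_mul_of_nonneg_right hkl hαk.le
      _ = α * k * (∑ i, p i * Real.log (z i / l i))
            + (Real.log (genPoly μ w) - Real.log (genPoly μ u)) := by
          field_simp
  have hstep2 := mul_le_mul_of_nonneg_left hstep hαk.le
  linarith [hkl2, hstep2]

lemma convex_posOrthant (n : ℕ) : Convex ℝ {z : Fin n → ℝ | ∀ i, 0 < z i} := by
  intro x hx y hy a b ha hb hab
  intro i
  simp only [Pi.add_apply, Pi.smul_apply, smul_eq_mul]
  rcases ha.eq_or_lt with h | h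
  · have hb1 : b = 1 := by linarith
    rw [← h, hb1]
    simpa using hy i
  · exact add_pos_of_pos_of_nonneg (mul_pos h (hx i))
      (mul_nonneg hb (hy i).le)

theorem stmt_3 (n k : ℕ) (α : ℝ) (hα0 : 0 < α) (hα1 : α ≤ 1)
    (μ : Finset (Fin n) → ℝ)
    (hμ0 : ∀ S, 0 ≤ μ S)
    (hμk : ∀ S, μ S ≠ 0 → S.card = k)
    (hμ1 : ∑ S : Finset (Fin n), μ S = 1)
    (hEI : ∀ lam : Fin n → ℝ, (∀ i, 0 < lam i) →
      ∀ ν : Finset (Fin n) → ℝ,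
        (∀ S, 0 ≤ ν S) → (∀ S, ν S ≠ 0 → S.card = k) →
        (∑ S : Finset (Fin n), ν S = 1) →
        (∀ S, extField μ lam S = 0 → ν S = 0) →
        KLdiv (down1 k ν) (down1 k (extField μ lam)) ≤
          (1 / (α * (k : ℝ))) * KLdiv ν (extField μ lam)) :
    ConcaveOn ℝ {z : Fin n → ℝ | ∀ i, 0 < z i}
      (fun z => Real.log (genPoly μ (fun i => z i ^ α))) := by
  refine ⟨convex_posOrthant n, ?_⟩
  intro x hx y hy a b ha hb hab
  by_cases hk : k = 0
  · -- degenerate case: μ is a point mass on ∅, genPoly ≡ 1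
    have hGone : ∀ z : Fin n → ℝ, genPoly μ (fun i => z i ^ α) = 1 := by
      intro z
      have : ∀ S : Finset (Fin n), μ S * ∏ i ∈ S, z i ^ α = μ S := by
        intro S
        by_cases hS : μ S = 0
        · rw [hS, zero_mul]
        · have : S = ∅ := Finset.card_eq_zero.mp (by rw [hμk S hS, hk])
          rw [this]
          simp
      rw [genPoly, Finset.sum_congr rfl fun S _ => this S, hμ1]
    simp only [hGone, Real.log_one, smul_eq_mul, mul_zero, add_zero, le_refl]
  · -- main case
    have hm : (a • x + b • y) ∈ {z : Fin n → ℝ | ∀ i, 0 < z i} :=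
      convex_posOrthant n hx hy ha hb hab
    set mf : Fin n → ℝ := a • x + b • y with hmf_def
    have hmf : ∀ i, mf i = a * x i + b * y i := fun i => rfl
    have hmfpos : ∀ i, 0 < mf i := hm
    set q : Fin n → ℝ := down1 k (extField μ (fun i => mf i ^ α)) with hq_def
    have hwpos : ∀ i, 0 < mf i ^ α := fun i => Real.rpow_pos_of_pos (hmfpos i) α
    have hqsum : ∑ i, q i = 1 := by
      refine sum_down1_one (Nat.cast_ne_zero.mpr hk) ?_ (extField_sum hμ0 hμ1 hwpos)
      intro S hS
      refine hμk S fun hc => hS ((extField_eq_zero_iff hμ0 hμ1 hwpos S).mpr hc)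
    have Hx := tangent_ineq n k hk α hα0 μ hμ0 hμk hμ1 hEI mf x hmfpos hx
    have Hy := tangent_ineq n k hk α hα0 μ hμ0 hμk hμ1 hEI mf y hmfpos hy
    rw [← hq_def] at Hx Hy
    set Sx : ℝ := ∑ i, q i * (x i / mf i) with hSx
    set Sy : ℝ := ∑ i, q i * (y i / mf i) with hSy
    have hcomb : a * Sx + b * Sy = 1 := by
      rw [hSx, hSy, Finset.mul_sum, Finset.mul_sum, ← Finset.sum_add_distrib]
      rw [show ∑ i, (a * (q i * (x i / mf i)) + b * (q i * (y i / mf i))) = ∑ i, q i from ?_, hqsum]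
      refine Finset.sum_congr rfl fun i _ => ?_
      have hne : mf i ≠ 0 := (hmfpos i).ne'
      have : a * (q i * (x i / mf i)) + b * (q i * (y i / mf i))
          = q i * ((a * x i + b * y i) / mf i) := by ring
      rw [this, ← hmf i, div_self hne, mul_one]
    simp only [smul_eq_mul]
    set Fm : ℝ := Real.log (genPoly μ (fun i => mf i ^ α)) with hFm
    have h1 : a * Real.log (genPoly μ (fun i => x i ^ α))
        ≤ a * (Fm + α * k * (Sx - 1)) := mul_le_mul_of_nonneg_left Hx ha
    have h2 : b * Real.log (genPoly μ (fun i => y i ^ α))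
        ≤ b * (Fm + α * k * (Sy - 1)) := mul_le_mul_of_nonneg_left Hy hb
    have h3 : α * (k:ℝ) * (a * Sx + b * Sy) = α * k := by rw [hcomb, mul_one]
    have h4 : (a + b) * Fm = Fm := by rw [hab, one_mul]
    have h5 : (a + b) * (α * (k:ℝ)) = α * k := by rw [hab, one_mul]
    linarith [h1, h2, h3, h4, h5]
end
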